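/- Let f : M → N be a smooth map between compact smooth manifolds and let E be a smooth complex vector bundle of finite rank over N. Regard C^∞(M,ℂ) as an algebra over C^∞(N,ℂ) via precomposition with f. Then the C^∞(M,ℂ)-linear map C^∞(M,ℂ) ⊗_{C^∞(N,ℂ)} Γ^∞(E) → Γ^∞(f*E) determined by g ⊗ s ↦ (x ↦ g(x)·s(f(x))) is a bijection (an isomorphism of C^∞(M,ℂ)-modules). -/

import Mathlib

open Bundle Manifold
open scoped TensorProduct

local notation "∞" => (⊤ : ℕ∞)

noncomputable section

/-- Complex multiplication and addition are smooth over `ℝ`, so that the complex-valued smooth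
functions on a real manifold form a (comm)ring. -/
instance : ContMDiffRing 𝓘(ℝ, ℂ) ∞ ℂ where
  contMDiff_add := by
    rw [contMDiff_iff]
    refine ⟨continuous_add, fun x y => ?_⟩
    simp only [mfld_simps]
    exact contDiff_add.contDiffOn
  contMDiff_mul := by
    rw [contMDiff_iff]
    refine ⟨continuous_mul, fun x y => ?_⟩
    simp only [mfld_simps]
    exact contDiff_mul.contDiffOn

variable {EM : Type*} [NormedAddCommGroup EM] [NormedSpace ℝ EM] [FiniteDimensional ℝ EM]
  {HM : Type*} [TopologicalSpace HM] {IM : ModelWithCorners ℝ EM HM}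
  {M : Type*} [TopologicalSpace M] [ChartedSpace HM M] [IsManifold IM ∞ M]
  [T2Space M] [SecondCountableTopology M] [CompactSpace M]

variable {EN : Type*} [NormedAddCommGroup EN] [NormedSpace ℝ EN] [FiniteDimensional ℝ EN]
  {HN : Type*} [TopologicalSpace HN] {IN : ModelWithCorners ℝ EN HN}
  {N : Type*} [TopologicalSpace N] [ChartedSpace HN N] [IsManifold IN ∞ N]
  [T2Space N] [SecondCountableTopology N] [CompactSpace N]

/-- The constant functions make the smooth complex-valued functions a `ℂ`-algebra. -/
instance : Algebra ℂ C^∞⟮IM, M; 𝓘(ℝ, ℂ), ℂ⟯ :=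
  RingHom.toAlgebra
    { toFun := fun c => ⟨fun _ => c, contMDiff_const⟩
      map_one' := rfl
      map_mul' := fun _ _ => rfl
      map_zero' := rfl
      map_add' := fun _ _ => rfl }

section SectionsModule

variable {EB : Type*} [NormedAddCommGroup EB] [NormedSpace ℝ EB]
  {HB : Type*} [TopologicalSpace HB] {IB : ModelWithCorners ℝ EB HB}
  {B : Type*} [TopologicalSpace B] [ChartedSpace HB B] [IsManifold IB ∞ B]
  {FB : Type*} [NormedAddCommGroup FB] [NormedSpace ℂ FB]
  {VB : B → Type*} [TopologicalSpace (TotalSpace FB VB)]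
  [∀ x, AddCommGroup (VB x)] [∀ x, Module ℂ (VB x)] [∀ x, TopologicalSpace (VB x)]
  [FiberBundle FB VB] [VectorBundle ℂ FB VB] [VectorBundle ℝ FB VB] [ContMDiffVectorBundle ∞ FB VB IB]

/-- Pointwise scalar multiplication of a smooth section by a smooth function. -/
instance ContMDiffSection.instSMulSmoothMap :
    SMul C^∞⟮IB, B; 𝓘(ℝ, ℂ), ℂ⟯ Cₛ^∞⟮IB; FB, VB⟯ := by
  refine ⟨fun f s => ⟨fun x => f x • s x, ?_⟩⟩
  intro x₀
  have hs := s.contMDiff x₀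
  have hf : ContMDiffAt IB 𝓘(ℝ, ℂ) ∞ f x₀ := f.contMDiff x₀
  rw [contMDiffAt_section] at hs ⊢
  set e := trivializationAt FB VB x₀
  have h1 : ContMDiffAt IB 𝓘(ℝ, FB →L[ℝ] FB) ∞
      (fun x => (ContinuousLinearMap.lsmul ℝ ℂ (f x) : FB →L[ℝ] FB)) x₀ :=
    ContDiff.comp_contMDiffAt
      (g := ⇑(ContinuousLinearMap.lsmul ℝ ℂ : ℂ →L[ℝ] FB →L[ℝ] FB))
      (ContinuousLinearMap.contDiff _) hf
  refine (h1.clm_apply hs).congr_of_eventuallyEq ?_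
  refine Filter.eventually_of_mem
    (e.open_baseSet.mem_nhds <| mem_baseSet_trivializationAt FB VB x₀) ?_
  intro x hx
  simp only [ContinuousLinearMap.lsmul_apply]
  exact (e.linear ℂ hx).2 (f x) (s x)

set_option linter.unusedSectionVars false in
@[simp]
theorem ContMDiffSection.coe_smul_smoothMap (f : C^∞⟮IB, B; 𝓘(ℝ, ℂ), ℂ⟯)
    (s : Cₛ^∞⟮IB; FB, VB⟯) (x : B) : (f • s) x = f x • s x :=
  rfl

/-- The smooth sections of a smooth complex vector bundle form a module over the algebra of
smooth complex-valued functions on the base. -/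
instance ContMDiffSection.instModuleSmoothMap :
    Module C^∞⟮IB, B; 𝓘(ℝ, ℂ), ℂ⟯ Cₛ^∞⟮IB; FB, VB⟯ where
  one_smul s := ContMDiffSection.ext fun x => one_smul ℂ (s x)
  mul_smul f g s := ContMDiffSection.ext fun x => mul_smul (f x) (g x) (s x)
  smul_zero f := ContMDiffSection.ext fun x => smul_zero (f x)
  smul_add f s t := ContMDiffSection.ext fun x => smul_add (f x) (s x) (t x)
  add_smul f g s := ContMDiffSection.ext fun x => add_smul (f x) (g x) (s x)
  zero_smul s := ContMDiffSection.ext fun x => zero_smul ℂ (s x)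


set_option linter.unusedSectionVars false in
/-- Evaluation of a finite sum of smooth sections. -/
theorem aux_coe_sum {ι : Type*} (G : Finset ι) (g : ι → Cₛ^∞⟮IB; FB, VB⟯) (y : B) :
    (∑ a ∈ G, g a) y = ∑ a ∈ G, g a y :=
  map_sum (⟨⟨fun (s : Cₛ^∞⟮IB; FB, VB⟯) => s y, rfl⟩, fun _ _ => rfl⟩ :
    Cₛ^∞⟮IB; FB, VB⟯ →+ VB y) g G

set_option linter.unusedSectionVars false in
/-- A cutoff of a constant local frame vector is a smooth global section. -/
theorem aux_cutoff_section_contMDiff (e : Trivialization FB (π FB VB)) [MemTrivializationAtlas e]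
    (χ : B → ℝ) (hχ : ContMDiff IB 𝓘(ℝ) ∞ χ) (hsupp : tsupport χ ⊆ e.baseSet) (v : FB) :
    ContMDiff IB (IB.prod 𝓘(ℝ, FB)) ∞ fun y => TotalSpace.mk' FB y (χ y • e.symm y v) := by
  intro y₀
  rw [contMDiffAt_section]
  set e' := trivializationAt FB VB y₀ with he'
  have hy₀' : y₀ ∈ e'.baseSet := mem_baseSet_trivializationAt FB VB y₀
  by_cases hy₀ : y₀ ∈ e.baseSet
  · have h1 : ContMDiffAt IB 𝓘(ℝ, FB →L[ℝ] FB) ∞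
        (fun y => (e.coordChangeL ℝ e' y : FB →L[ℝ] FB)) y₀ :=
      contMDiffAt_coordChangeL hy₀ hy₀'
    have h2 : ContMDiffAt IB 𝓘(ℝ, FB) ∞ (fun y => χ y • e.coordChangeL ℝ e' y v) y₀ :=
      (hχ y₀).smul (h1.clm_apply contMDiffAt_const)
    refine h2.congr_of_eventuallyEq ?_
    refine Filter.eventually_of_mem
      ((e.open_baseSet.inter e'.open_baseSet).mem_nhds ⟨hy₀, hy₀'⟩) ?_
    intro y hy
    calc (e' ⟨y, χ y • e.symm y v⟩).2
        = χ y • (e' ⟨y, e.symm y v⟩).2 := (e'.linear ℝ hy.2).2 (χ y) (e.symm y v)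
      _ = χ y • e.coordChangeL ℝ e' y v := by rw [e.coordChangeL_apply e' hy]
  · have h0 : y₀ ∉ tsupport χ := fun h => hy₀ (hsupp h)
    refine (contMDiffAt_const (c := (0 : FB))).congr_of_eventuallyEq ?_
    refine Filter.eventually_of_mem
      ((((isClosed_tsupport χ).isOpen_compl).inter e'.open_baseSet).mem_nhds ⟨h0, hy₀'⟩) ?_
    intro y hy
    show (e' ⟨y, χ y • e.symm y v⟩).2 = 0
    rw [image_eq_zero_of_notMem_tsupport hy.1, zero_smul]
    exact (e'.linear ℝ hy.2).map_zero

set_option linter.unusedSectionVars false in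
/-- A cutoff of a coordinate of a smooth section in a local trivialization is smooth. -/
theorem aux_cutoff_coord_contMDiff (e : Trivialization FB (π FB VB)) [MemTrivializationAtlas e]
    (χ : B → ℝ) (hχ : ContMDiff IB 𝓘(ℝ) ∞ χ) (hsupp : tsupport χ ⊆ e.baseSet)
    (φ : FB →L[ℝ] ℂ) (s : Cₛ^∞⟮IB; FB, VB⟯) :
    ContMDiff IB 𝓘(ℝ, ℂ) ∞ fun y => χ y • φ (e.continuousLinearMapAt ℝ y (s y)) := by
  intro y₀
  by_cases hy₀ : y₀ ∈ e.baseSet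
  · set e' := trivializationAt FB VB y₀ with he'
    have hy₀' : y₀ ∈ e'.baseSet := mem_baseSet_trivializationAt FB VB y₀
    have hs := s.contMDiff y₀
    rw [contMDiffAt_section] at hs
    have h1 : ContMDiffAt IB 𝓘(ℝ, FB →L[ℝ] FB) ∞
        (fun y => (e'.coordChangeL ℝ e y : FB →L[ℝ] FB)) y₀ :=
      contMDiffAt_coordChangeL hy₀' hy₀
    have h2 : ContMDiffAt IB 𝓘(ℝ, ℂ) ∞
        (fun y => χ y • φ (e'.coordChangeL ℝ e y ((e' ⟨y, s y⟩).2))) y₀ :=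
      (hχ y₀).smul (ContDiff.comp_contMDiffAt (g := ⇑φ) φ.contDiff (h1.clm_apply hs))
    refine h2.congr_of_eventuallyEq ?_
    refine Filter.eventually_of_mem
      ((e'.open_baseSet.inter e.open_baseSet).mem_nhds ⟨hy₀', hy₀⟩) ?_
    intro y hy
    have ha : e.continuousLinearMapAt ℝ y (s y) = (e ⟨y, s y⟩).2 := by
      rw [Trivialization.continuousLinearMapAt_apply ℝ e, e.coe_linearMapAt_of_mem hy.2]
    have hb : e'.coordChangeL ℝ e y ((e' ⟨y, s y⟩).2) = (e ⟨y, s y⟩).2 := by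
      rw [e'.coordChangeL_apply e hy, e'.symm_apply_apply_mk hy.1]
    show χ y • φ (e.continuousLinearMapAt ℝ y (s y))
      = χ y • φ (e'.coordChangeL ℝ e y ((e' ⟨y, s y⟩).2))
    rw [ha, ← hb]
  · have h0 : y₀ ∉ tsupport χ := fun h => hy₀ (hsupp h)
    refine (contMDiffAt_const (c := (0 : ℂ))).congr_of_eventuallyEq ?_
    refine Filter.eventually_of_mem
      (((isClosed_tsupport χ).isOpen_compl).mem_nhds h0) ?_
    intro y hy
    show χ y • φ (e.continuousLinearMapAt ℝ y (s y)) = 0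
    rw [image_eq_zero_of_notMem_tsupport hy, zero_smul]

set_option linter.unusedSectionVars false in
/-- The fiberwise trivialization coordinate map does not depend on the scalar field. -/
theorem aux_cLMA_real_eq_complex (e : Trivialization FB (π FB VB)) [MemTrivializationAtlas e]
    (y : B) (w : VB y) :
    e.continuousLinearMapAt ℝ y w = e.continuousLinearMapAt ℂ y w := by
  rw [Trivialization.continuousLinearMapAt_apply ℝ e, Trivialization.continuousLinearMapAt_apply ℂ e,
    e.coe_linearMapAt, e.coe_linearMapAt]

end SectionsModule

variable {F : Type*} [NormedAddCommGroup F] [NormedSpace ℂ F] [FiniteDimensional ℂ F]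
  {V : N → Type*} [TopologicalSpace (TotalSpace F V)]
  [∀ y, AddCommGroup (V y)] [∀ y, Module ℂ (V y)] [∀ y, TopologicalSpace (V y)]
  [FiberBundle F V] [VectorBundle ℂ F V] [VectorBundle ℝ F V] [ContMDiffVectorBundle ∞ F V IN]

attribute [-instance] instAddCommMonoidPullback instModulePullback

instance instPullbackFiberAddCommGroup {f : M → N} (x : M) : AddCommGroup ((f *ᵖ V) x) :=
  inferInstanceAs (AddCommGroup (V (f x)))

instance instPullbackFiberModuleComplex {f : M → N} (x : M) : Module ℂ ((f *ᵖ V) x) :=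
  inferInstanceAs (Module ℂ (V (f x)))

instance instPullbackFiberModuleReal {f : M → N} (x : M) : Module ℝ ((f *ᵖ V) x) :=
  inferInstanceAs (Module ℝ (V (f x)))

instance instPullbackVectorBundleReal (f : C^∞⟮IM, M; IN, N⟯) :
    VectorBundle ℝ F (⇑f *ᵖ V) := by
  exact VectorBundle.pullback (𝕜 := ℝ) (F := F) (E := V) f

instance instPullbackVectorBundleComplex (f : C^∞⟮IM, M; IN, N⟯) :
    VectorBundle ℂ F (⇑f *ᵖ V) := by
  exact VectorBundle.pullback (𝕜 := ℂ) (F := F) (E := V) f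

instance instPullbackSmoothVectorBundle (f : C^∞⟮IM, M; IN, N⟯) :
    ContMDiffVectorBundle ∞ F (⇑f *ᵖ V) IM := by
  exact ContMDiffVectorBundle.pullback F V IM f


instance aux_memAtlas_pullback (f : C^∞⟮IM, M; IN, N⟯) (e : Trivialization F (π F V))
    [he : MemTrivializationAtlas e] :
    MemTrivializationAtlas (e.pullback f : Trivialization F (π F (⇑f *ᵖ V))) :=
  ⟨⟨e, he, rfl⟩⟩

/-- The coordinate map of the pullback trivialization agrees with that of the original. -/
theorem aux_pullback_cLMA (f : C^∞⟮IM, M; IN, N⟯) (e : Trivialization F (π F V))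
    [MemTrivializationAtlas e] (x : M) (w : V (f x)) :
    (e.pullback f : Trivialization F (π F (⇑f *ᵖ V))).continuousLinearMapAt ℝ x w
      = e.continuousLinearMapAt ℝ (f x) w := by
  rw [Trivialization.continuousLinearMapAt_apply ℝ, Trivialization.continuousLinearMapAt_apply ℝ,
    Trivialization.coe_linearMapAt, Trivialization.coe_linearMapAt]
  rfl

/-- Pullback of a smooth section along a smooth map is a smooth section. -/
theorem aux_pullback_section_contMDiff (f : C^∞⟮IM, M; IN, N⟯) (s : Cₛ^∞⟮IN; F, V⟯) :
    ContMDiff IM (IM.prod 𝓘(ℝ, F)) ∞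
      fun x => TotalSpace.mk' F (E := ⇑f *ᵖ V) x (s (f x)) := by
  intro x₀
  refine (contMDiffAt_section (𝕜 := ℝ) (E := ⇑f *ᵖ V) (s := fun x => s (f x)) x₀).2 ?_
  have hs := s.contMDiff (f x₀)
  rw [contMDiffAt_section] at hs
  have hf : ContMDiffAt IM IN ∞ f x₀ := f.contMDiff x₀
  exact (hs.comp x₀ hf :)

/-- Pullback of smooth sections, as a smooth section of the pullback bundle. -/
def auxPull (f : C^∞⟮IM, M; IN, N⟯) (s : Cₛ^∞⟮IN; F, V⟯) : Cₛ^∞⟮IM; F, f *ᵖ V⟯ :=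
  ⟨fun x => s (f x), aux_pullback_section_contMDiff f s⟩

@[simp] theorem auxPull_apply (f : C^∞⟮IM, M; IN, N⟯) (s : Cₛ^∞⟮IN; F, V⟯) (x : M) :
    auxPull f s x = s (f x) := rfl

theorem auxPull_add (f : C^∞⟮IM, M; IN, N⟯) (s t : Cₛ^∞⟮IN; F, V⟯) :
    auxPull f (s + t) = auxPull f s + auxPull f t := rfl

set_option maxHeartbeats 2000000

/-- For a smooth map `f : M → N` between compact manifolds and a smooth complex vector bundle `E`
over `N`, pulling back sections induces an isomorphism
`C^∞(M,ℂ) ⊗_{C^∞(N,ℂ)} Γ^∞(E) ≅ Γ^∞(f*E)` of modules over `C^∞(M,ℂ)`, where `C^∞(M,ℂ)` is a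
`C^∞(N,ℂ)`-algebra via precomposition with `f`. -/
theorem pullback_sections_tensor_equiv (f : C^∞⟮IM, M; IN, N⟯)
    [Algebra C^∞⟮IN, N; 𝓘(ℝ, ℂ), ℂ⟯ C^∞⟮IM, M; 𝓘(ℝ, ℂ), ℂ⟯]
    (halg : ∀ (h : C^∞⟮IN, N; 𝓘(ℝ, ℂ), ℂ⟯) (x : M),
      algebraMap C^∞⟮IN, N; 𝓘(ℝ, ℂ), ℂ⟯ C^∞⟮IM, M; 𝓘(ℝ, ℂ), ℂ⟯ h x = h (f x)) :
    ∃ T : (C^∞⟮IM, M; 𝓘(ℝ, ℂ), ℂ⟯ ⊗[C^∞⟮IN, N; 𝓘(ℝ, ℂ), ℂ⟯] Cₛ^∞⟮IN; F, V⟯)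
        →ₗ[C^∞⟮IM, M; 𝓘(ℝ, ℂ), ℂ⟯] Cₛ^∞⟮IM; F, f *ᵖ V⟯,
      (∀ (g : C^∞⟮IM, M; 𝓘(ℝ, ℂ), ℂ⟯) (s : Cₛ^∞⟮IN; F, V⟯) (x : M),
        T (g ⊗ₜ s) x = g x • s (f x)) ∧ Function.Bijective T := by
  classical
  -- the forward map
  let Pb : C^∞⟮IM, M; 𝓘(ℝ, ℂ), ℂ⟯ →+ Cₛ^∞⟮IN; F, V⟯ →+ Cₛ^∞⟮IM; F, f *ᵖ V⟯ :=
    { toFun := fun g =>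
        { toFun := fun s => g • auxPull f s
          map_zero' := by
            apply ContMDiffSection.ext; intro x
            show g x • (0 : V (f x)) = 0
            simp
          map_add' := fun s t => by
            apply ContMDiffSection.ext; intro x
            show g x • (s (f x) + t (f x)) = g x • s (f x) + g x • t (f x)
            simp [smul_add] }
      map_zero' := by
        ext s x
        show (0 : ℂ) • s (f x) = 0
        simp
      map_add' := fun g g' => by
        ext s x
        show (g x + g' x) • s (f x) = g x • s (f x) + g' x • s (f x)
        simp [add_smul] }
  have hbal : ∀ (r : C^∞⟮IN, N; 𝓘(ℝ, ℂ), ℂ⟯) (g : C^∞⟮IM, M; 𝓘(ℝ, ℂ), ℂ⟯)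
      (s : Cₛ^∞⟮IN; F, V⟯), Pb (r • g) s = Pb g (r • s) := by
    intro r g s
    apply ContMDiffSection.ext; intro x
    show ((r • g) x) • s (f x) = g x • (r • s) (f x)
    rw [Algebra.smul_def]
    show (algebraMap C^∞⟮IN, N; 𝓘(ℝ, ℂ), ℂ⟯ C^∞⟮IM, M; 𝓘(ℝ, ℂ), ℂ⟯ r x * g x) • s (f x)
      = g x • (r (f x) • s (f x))
    rw [halg, mul_comm, mul_smul]
  let T0 := TensorProduct.liftAddHom Pb hbal
  have hT0 : ∀ (g : C^∞⟮IM, M; 𝓘(ℝ, ℂ), ℂ⟯) (s : Cₛ^∞⟮IN; F, V⟯),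
      T0 (g ⊗ₜ s) = g • auxPull f s := fun g s => TensorProduct.liftAddHom_tmul Pb hbal g s
  let T : (C^∞⟮IM, M; 𝓘(ℝ, ℂ), ℂ⟯ ⊗[C^∞⟮IN, N; 𝓘(ℝ, ℂ), ℂ⟯] Cₛ^∞⟮IN; F, V⟯)
      →ₗ[C^∞⟮IM, M; 𝓘(ℝ, ℂ), ℂ⟯] Cₛ^∞⟮IM; F, f *ᵖ V⟯ :=
    { toFun := T0
      map_add' := map_add T0
      map_smul' := by
        intro a u
        show T0 (a • u) = a • T0 u
        induction u using TensorProduct.induction_on with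
        | zero => rw [smul_zero, map_zero, smul_zero]
        | tmul g s => rw [TensorProduct.smul_tmul', smul_eq_mul, hT0, hT0, mul_smul]
        | add u v hu hv => rw [smul_add, map_add, map_add, hu, hv, smul_add] }
  have hTtmul : ∀ (g : C^∞⟮IM, M; 𝓘(ℝ, ℂ), ℂ⟯) (s : Cₛ^∞⟮IN; F, V⟯) (x : M),
      T (g ⊗ₜ s) x = g x • s (f x) := by
    intro g s x
    show T0 (g ⊗ₜ s) x = g x • s (f x)
    rw [hT0]
    rfl
  refine ⟨T, hTtmul, ?_⟩
  -- Construct the partition-of-unity dual basis data.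
  obtain ⟨ρ, hρ⟩ := SmoothPartitionOfUnity.exists_isSubordinate (I := IN) isClosed_univ
    (fun y : N => (trivializationAt F V y).baseSet)
    (fun y => (trivializationAt F V y).open_baseSet)
    (fun y _ => Set.mem_iUnion.2 ⟨y, mem_baseSet_trivializationAt F V y⟩)
  set J : Finset N := ρ.locallyFinite.finite_nonempty_of_compact.toFinset with hJdef
  have hsupJ : ∀ y : N, (Function.support fun i => ρ i y) ⊆ ↑J := by
    intro y i hi
    simp only [hJdef, Finset.mem_coe, Set.Finite.mem_toFinset]
    exact ⟨y, hi⟩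
  have hsum : ∀ y : N, ∑ i ∈ J, ρ i y = 1 := by
    intro y
    rw [← finsum_eq_sum_of_support_subset _ (hsupJ y)]
    exact ρ.sum_eq_one (Set.mem_univ y)
  set hG : C^∞⟮IN, N; 𝓘(ℝ), ℝ⟯ := ∑ i ∈ J, ρ i * ρ i with hGdef
  have hGval : ∀ y, hG y = ∑ i ∈ J, ρ i y * ρ i y := fun y =>
    map_sum (⟨⟨fun (g : C^∞⟮IN, N; 𝓘(ℝ), ℝ⟯) => g y, rfl⟩, fun _ _ => rfl⟩ :
      C^∞⟮IN, N; 𝓘(ℝ), ℝ⟯ →+ ℝ) _ J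
  have hGpos : ∀ y, 0 < hG y := by
    intro y
    rw [hGval]
    obtain ⟨i, hiJ, hne⟩ : ∃ i ∈ J, ρ i y ≠ 0 := by
      apply Finset.exists_ne_zero_of_sum_ne_zero
      rw [hsum y]; exact one_ne_zero
    exact Finset.sum_pos' (fun j _ => mul_self_nonneg _) ⟨i, hiJ, mul_self_pos.mpr hne⟩
  set σ : N → N → ℝ := fun i y => ρ i y / hG y with hσdef
  have hσs : ∀ i : N, ContMDiff IN 𝓘(ℝ) ∞ (σ i) := fun i =>
    (ρ i).contMDiff.div₀ hG.contMDiff (fun y => (hGpos y).ne')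
  have hσsupp : ∀ i : N, tsupport (σ i) ⊆ (trivializationAt F V i).baseSet := by
    intro i
    have hsub : Function.support (σ i) ⊆ tsupport (ρ i) := by
      intro y hy
      have hne : ρ i y ≠ 0 := by
        intro h0
        apply hy
        show ρ i y / hG y = 0
        rw [h0, zero_div]
      exact subset_closure hne
    exact (closure_minimal hsub (isClosed_tsupport (ρ i))).trans (hρ i)
  have hσsuppP : ∀ i : N, tsupport (fun x => σ i (f x))
      ⊆ (((trivializationAt F V i).pullback f : Trivialization F (π F (⇑f *ᵖ V)))).baseSet := by
    intro i
    refine (closure_minimal (fun x hx => ?_)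
      ((isClosed_tsupport (σ i)).preimage f.contMDiff.continuous)).trans
      (Set.preimage_mono (hσsupp i))
    exact subset_closure hx
  set bF : Module.Basis (Fin (Module.finrank ℂ F)) ℂ F := Module.finBasis ℂ F with hbF
  set φ : Fin (Module.finrank ℂ F) → (F →L[ℝ] ℂ) :=
    fun j => (LinearMap.toContinuousLinearMap (bF.coord j)).restrictScalars ℝ with hφdef
  have hφapp : ∀ j w, φ j w = bF.repr w j := fun j w => by
    simp [hφdef, Module.Basis.coord_apply]
  have hφlin : ∀ j (c : ℂ) (w : F), φ j (c • w) = c * φ j w := by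
    intro j c w
    simp [hφapp, map_smul]
  -- the global sections and the dual coefficient functionals
  set Sec : (J × Fin (Module.finrank ℂ F)) → Cₛ^∞⟮IN; F, V⟯ := fun a =>
    ⟨fun y => ρ a.1 y • (trivializationAt F V (a.1 : N)).symm y (bF a.2),
      aux_cutoff_section_contMDiff (trivializationAt F V (a.1 : N)) (ρ a.1) (ρ a.1).contMDiff
        (hρ a.1) (bF a.2)⟩ with hSecdef
  set eps : (J × Fin (Module.finrank ℂ F)) → Cₛ^∞⟮IN; F, V⟯ → C^∞⟮IN, N; 𝓘(ℝ, ℂ), ℂ⟯ :=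
    fun a s =>
    ⟨fun y => σ a.1 y • φ a.2 ((trivializationAt F V (a.1 : N)).continuousLinearMapAt ℝ y (s y)),
      aux_cutoff_coord_contMDiff (trivializationAt F V (a.1 : N)) (σ a.1) (hσs a.1)
        (hσsupp a.1) (φ a.2) s⟩ with hepsdef
  set epsP : (J × Fin (Module.finrank ℂ F)) → Cₛ^∞⟮IM; F, f *ᵖ V⟯ →
      C^∞⟮IM, M; 𝓘(ℝ, ℂ), ℂ⟯ := fun a t =>
    ⟨fun x => σ a.1 (f x) •
        φ a.2 (((trivializationAt F V (a.1 : N)).pullback f).continuousLinearMapAt ℝ x (t x)),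
      aux_cutoff_coord_contMDiff ((trivializationAt F V (a.1 : N)).pullback f)
        (fun x => σ a.1 (f x)) ((hσs a.1).comp f.contMDiff) (hσsuppP a.1) (φ a.2) t⟩ with hepsPdef
  -- the key pointwise dual-basis identity
  have key : ∀ (y : N) (v : V y),
      ∑ a : J × Fin (Module.finrank ℂ F),
        (σ a.1 y • φ a.2 ((trivializationAt F V (a.1 : N)).continuousLinearMapAt ℝ y v) : ℂ)
          • (ρ a.1 y • (trivializationAt F V (a.1 : N)).symm y (bF a.2)) = v := by
    intro y v
    rw [Fintype.sum_prod_type]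
    have hinner : ∀ i : J,
        (∑ j : Fin (Module.finrank ℂ F),
          (σ i.1 y • φ j ((trivializationAt F V (i : N)).continuousLinearMapAt ℝ y v) : ℂ)
            • (ρ i.1 y • (trivializationAt F V (i : N)).symm y (bF j)))
        = ((σ i.1 y * ρ i.1 y : ℝ) : ℂ) • v := by
      intro i
      set E := trivializationAt F V (i : N)
      by_cases hy : y ∈ E.baseSet
      · have hterm : ∀ j,
            (σ i.1 y • φ j (E.continuousLinearMapAt ℝ y v) : ℂ)
              • (ρ i.1 y • E.symm y (bF j))
            = ((σ i.1 y * ρ i.1 y : ℝ) : ℂ) •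
                (φ j (E.continuousLinearMapAt ℝ y v) • E.symmL ℂ y (bF j)) := by
          intro j
          have h1 : ρ i.1 y • E.symm y (bF j) = ((ρ i.1 y : ℝ) : ℂ) • E.symmL ℂ y (bF j) := by
            rw [Complex.coe_smul, E.symmL_apply hy]
          rw [h1, Complex.real_smul, smul_smul, smul_smul]
          congr 1
          push_cast
          ring
        rw [Finset.sum_congr rfl fun j _ => hterm j, ← Finset.smul_sum]
        congr 1
        have h2 : ∑ j : Fin (Module.finrank ℂ F),
            φ j (E.continuousLinearMapAt ℝ y v) • E.symmL ℂ y (bF j)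
            = E.symmL ℂ y (∑ j, φ j (E.continuousLinearMapAt ℝ y v) • bF j) := by
          rw [map_sum]
          exact Finset.sum_congr rfl fun j _ => (map_smul _ _ _).symm
        rw [h2]
        have h3 : (∑ j, φ j (E.continuousLinearMapAt ℝ y v) • bF j)
            = E.continuousLinearMapAt ℝ y v := by
          conv_rhs => rw [← bF.sum_repr (E.continuousLinearMapAt ℝ y v)]
          exact Finset.sum_congr rfl fun j _ => by rw [hφapp]
        rw [h3]
        have h4 : E.symmL ℂ y (E.continuousLinearMapAt ℝ y v)
            = E.symmL ℝ y (E.continuousLinearMapAt ℝ y v) := by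
          rw [E.symmL_apply hy, E.symmL_apply hy]
        rw [h4, E.symmL_continuousLinearMapAt hy]
      · have hr : ρ i.1 y = 0 := by
          by_contra hne
          exact hy (hρ i.1 (subset_closure hne))
        have hs0 : σ i.1 y = 0 := by
          show ρ i.1 y / hG y = 0
          rw [hr, zero_div]
        simp [hr, hs0]
    rw [Finset.sum_congr rfl fun i _ => hinner i, ← Finset.sum_smul]
    have h5 : (∑ i : J, ((σ i.1 y * ρ i.1 y : ℝ) : ℂ)) = 1 := by
      rw [← Complex.ofReal_sum]
      have h6 : ∑ i : J, σ i.1 y * ρ i.1 y = 1 := by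
        rw [Finset.sum_coe_sort J (fun i => σ i y * ρ i y)]
        have h7 : ∀ i ∈ J, σ i y * ρ i y = ρ i y * ρ i y / hG y := fun i _ => by
          show ρ i y / hG y * ρ i y = _
          ring
        rw [Finset.sum_congr rfl h7, ← Finset.sum_div, ← hGval y, div_self (hGpos y).ne']
      rw [h6, Complex.ofReal_one]
    rw [h5, one_smul]
  -- the representation of any smooth section in terms of the dual basis
  have hrepr : ∀ s : Cₛ^∞⟮IN; F, V⟯, (∑ a, eps a s • Sec a) = s := by
    intro s
    apply ContMDiffSection.ext; intro y
    rw [aux_coe_sum]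
    exact key y (s y)
  -- right inverse
  have hTS : ∀ t : Cₛ^∞⟮IM; F, f *ᵖ V⟯, T (∑ a, epsP a t ⊗ₜ Sec a) = t := by
    intro t
    rw [map_sum]
    apply ContMDiffSection.ext; intro x
    rw [aux_coe_sum]
    have hterm : ∀ a : J × Fin (Module.finrank ℂ F),
        T (epsP a t ⊗ₜ Sec a) x
        = (σ a.1 (f x) •
            φ a.2 ((trivializationAt F V (a.1 : N)).continuousLinearMapAt ℝ (f x) (t x)) : ℂ)
            • (ρ a.1 (f x) • (trivializationAt F V (a.1 : N)).symm (f x) (bF a.2)) := by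
      intro a
      rw [hTtmul]
      show (σ a.1 (f x) •
          φ a.2 (((trivializationAt F V (a.1 : N)).pullback f).continuousLinearMapAt ℝ x (t x)) : ℂ)
          • Sec a (f x) = _
      rw [aux_pullback_cLMA f (trivializationAt F V (a.1 : N)) x (t x)]
      rfl
    rw [Finset.sum_congr rfl fun a _ => hterm a]
    exact key (f x) (t x)
  -- epsP applied to the image of a pure tensor
  have hgs : ∀ (a : J × Fin (Module.finrank ℂ F)) (g : C^∞⟮IM, M; 𝓘(ℝ, ℂ), ℂ⟯)
      (s : Cₛ^∞⟮IN; F, V⟯),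
      epsP a (g • auxPull f s)
        = g * algebraMap C^∞⟮IN, N; 𝓘(ℝ, ℂ), ℂ⟯ C^∞⟮IM, M; 𝓘(ℝ, ℂ), ℂ⟯ (eps a s) := by
    intro a g s
    apply ContMDiffMap.ext; intro x
    set E := trivializationAt F V (a.1 : N)
    show σ a.1 (f x) •
        φ a.2 ((E.pullback f).continuousLinearMapAt ℝ x (g x • s (f x)))
        = g x * algebraMap C^∞⟮IN, N; 𝓘(ℝ, ℂ), ℂ⟯ C^∞⟮IM, M; 𝓘(ℝ, ℂ), ℂ⟯ (eps a s) x
    rw [aux_pullback_cLMA f E x]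
    have h8 : E.continuousLinearMapAt ℝ (f x) (g x • s (f x))
        = g x • E.continuousLinearMapAt ℝ (f x) (s (f x)) := by
      rw [aux_cLMA_real_eq_complex, aux_cLMA_real_eq_complex, map_smul]
    rw [h8, hφlin, halg]
    show σ a.1 (f x) • (g x * φ a.2 (E.continuousLinearMapAt ℝ (f x) (s (f x))))
      = g x * (σ a.1 (f x) • φ a.2 (E.continuousLinearMapAt ℝ (f x) (s (f x))))
    rw [Complex.real_smul, Complex.real_smul]
    ring
  -- epsP is additive and sends zero to zero
  have hepsP0 : ∀ a : J × Fin (Module.finrank ℂ F), epsP a 0 = 0 := by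
    intro a
    apply ContMDiffMap.ext; intro x
    show σ a.1 (f x) • φ a.2
      (((trivializationAt F V (a.1 : N)).pullback f).continuousLinearMapAt ℝ x
        (0 : (⇑f *ᵖ V) x)) = 0
    rw [map_zero, map_zero, smul_zero]
  have hepsPadd : ∀ (a : J × Fin (Module.finrank ℂ F)) (t t' : Cₛ^∞⟮IM; F, f *ᵖ V⟯),
      epsP a (t + t') = epsP a t + epsP a t' := by
    intro a t t'
    apply ContMDiffMap.ext; intro x
    show σ a.1 (f x) • φ a.2
        (((trivializationAt F V (a.1 : N)).pullback f).continuousLinearMapAt ℝ x (t x + t' x))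
      = _
    rw [map_add, map_add, smul_add]
    rfl
  -- left inverse
  set Sfun : Cₛ^∞⟮IM; F, f *ᵖ V⟯ →
      C^∞⟮IM, M; 𝓘(ℝ, ℂ), ℂ⟯ ⊗[C^∞⟮IN, N; 𝓘(ℝ, ℂ), ℂ⟯] Cₛ^∞⟮IN; F, V⟯ :=
    fun t => ∑ a, epsP a t ⊗ₜ Sec a with hSfundef
  have hSadd : ∀ t t', Sfun (t + t') = Sfun t + Sfun t' := by
    intro t t'
    show (∑ a, epsP a (t + t') ⊗ₜ Sec a) = _
    rw [← Finset.sum_add_distrib]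
    exact Finset.sum_congr rfl fun a _ => by rw [hepsPadd, TensorProduct.add_tmul]
  have hST : ∀ u, Sfun (T u) = u := by
    intro u
    induction u using TensorProduct.induction_on with
    | zero =>
      rw [map_zero]
      show (∑ a, epsP a 0 ⊗ₜ Sec a) = 0
      rw [Finset.sum_congr rfl fun a _ => by rw [hepsP0 a, TensorProduct.zero_tmul]]
      exact Finset.sum_const_zero
    | tmul g s =>
      have hTg : T (g ⊗ₜ s) = g • auxPull f s := hT0 g s
      rw [hTg]
      show (∑ a, epsP a (g • auxPull f s) ⊗ₜ Sec a) = g ⊗ₜ s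
      calc (∑ a, epsP a (g • auxPull f s) ⊗ₜ Sec a)
          = ∑ a, g ⊗ₜ (eps a s • Sec a) := by
            refine Finset.sum_congr rfl fun a _ => ?_
            rw [hgs, mul_comm, ← Algebra.smul_def, TensorProduct.smul_tmul]
        _ = g ⊗ₜ (∑ a, eps a s • Sec a) := (TensorProduct.tmul_sum g _ _).symm
        _ = g ⊗ₜ s := by rw [hrepr s]
    | add u v hu hv =>
      rw [map_add, hSadd, hu, hv]
  exact ⟨fun u v huv => by rw [← hST u, huv, hST v],
    fun t => ⟨Sfun t, hTS t⟩⟩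

end
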